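/- For a ring R, the following are equivalent: (1) the direct product of any family of copies of R is flat as a right R-module; (2) every finitely generated submodule of a free left R-module is finitely presented; (3) every finitely generated left ideal of R is finitely presented. -/

import Mathlib

open Finsupp LinearMap Submodule

variable {R : Type} [CommRing R]

private lemma lc_fintype {M : Type} [AddCommGroup M] [Module R M] {ι : Type} [Fintype ι]
    (w : ι → M) (v : ι →₀ R) :
    Finsupp.linearCombination R w v = ∑ j, v j • w j := by
  rw [Finsupp.linearCombination_apply, Finsupp.sum_fintype]
  intro i; simp

private lemma finsupp_eq_sum_single_smul {ι : Type} [Fintype ι] (v : ι →₀ R) :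
    v = ∑ j, v j • Finsupp.single j 1 := by
  ext j'
  simp [Finsupp.single_apply, Finset.sum_ite_eq']

private lemma chase_1_to_3 (h1 : ∀ ι : Type, Module.Flat R (ι → R))
    (I : Ideal R) (hI : I.FG) : Module.FinitePresentation R I := by
  classical
  obtain ⟨s, hs⟩ := hI
  set g : (↥s →₀ R) →ₗ[R] R := Finsupp.linearCombination R (fun j : ↥s => (j : R)) with hg
  have hrange : LinearMap.range g = I := by
    rw [hg, Finsupp.range_linearCombination,
      show Set.range (fun j : ↥s => (j : R)) = ↑s from Subtype.range_coe]
    exact hs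
  set K := LinearMap.ker g with hKdef
  -- Step 1 : K is finitely generated, via flatness of K → R
  have hK : K.FG := by
    haveI := h1 ↥K
    set x : (↥s →₀ R) →ₗ[R] (↥K → R) :=
      LinearMap.pi (fun k : ↥K => Finsupp.linearCombination R (fun j : ↥s => (k : ↥s →₀ R) j))
      with hx
    set f : ↥s →₀ R := Finsupp.equivFunOnFinite.symm (fun j : ↥s => (j : R)) with hf
    have hfj : ∀ j : ↥s, f j = (j : R) := fun j => rfl
    have hxapp : ∀ (v : ↥s →₀ R) (k : ↥K), x v k = ∑ j, v j * (k : ↥s →₀ R) j := by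
      intro v k
      rw [hx]
      simp only [LinearMap.pi_apply]
      rw [lc_fintype]
      simp [smul_eq_mul]
    have hgk : ∀ k : ↥K, ∑ j, ((k : ↥s →₀ R) j) * (j : R) = 0 := by
      intro k
      have := k.2
      rw [LinearMap.mem_ker, hg] at this
      rw [← this, lc_fintype]
      simp [smul_eq_mul]
    have hxf : x f = 0 := by
      funext k
      rw [hxapp]
      simp only [hfj]
      rw [Pi.zero_apply, ← hgk k]
      exact Finset.sum_congr rfl (fun j _ => mul_comm _ _)
    obtain ⟨κ, a, y, hxy, haf⟩ :=
      Module.Flat.exists_factorization_of_apply_eq_zero_of_free (R := R) (M := ↥K → R) hxf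
    set c : Fin κ → (↥s →₀ R) :=
      fun l => Finsupp.equivFunOnFinite.symm (fun j : ↥s => a (Finsupp.single j 1) l) with hc
    have hcj : ∀ l j, c l j = a (Finsupp.single j 1) l := fun l j => rfl
    have hcK : ∀ l, c l ∈ K := by
      intro l
      rw [hKdef, LinearMap.mem_ker, hg, lc_fintype]
      have haf' : a f = 0 := haf
      have : a f l = 0 := by rw [haf']; rfl
      rw [finsupp_eq_sum_single_smul f] at this
      simp only [map_sum, map_smul] at this
      have h2 : ∑ j, f j * a (Finsupp.single j 1) l = 0 := by
        rw [← this]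
        simp [Finset.sum_apply']
      rw [← h2]
      exact Finset.sum_congr rfl (fun j _ => by rw [hcj, smul_eq_mul, hfj, mul_comm])
    have hspan : K = Submodule.span R (Set.range c) := by
      apply le_antisymm
      · intro k hk
        have hk' : ∀ j : ↥s, k j = ∑ l, a (Finsupp.single j 1) l * y (Finsupp.single l 1) ⟨k, hk⟩ := by
          intro j
          have h1 : x (Finsupp.single j 1) ⟨k, hk⟩ = k j := by
            rw [hxapp]
            simp [Finsupp.single_apply, Finset.sum_ite_eq']
          rw [← h1, hxy]
          simp only [LinearMap.comp_apply]
          conv_lhs => rw [finsupp_eq_sum_single_smul (a (Finsupp.single j 1))]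
          rw [map_sum]
          simp only [map_smul]
          simp [Finset.sum_apply', smul_eq_mul]
        have : k = ∑ l, y (Finsupp.single l 1) ⟨k, hk⟩ • c l := by
          ext j
          rw [hk' j]
          simp only [Finsupp.finset_sum_apply, Finsupp.smul_apply, smul_eq_mul]
          exact Finset.sum_congr rfl (fun l _ => by rw [hcj, mul_comm])
        rw [this]
        exact Submodule.sum_mem _ (fun l _ =>
          Submodule.smul_mem _ _ (Submodule.subset_span (Set.mem_range_self l)))
      · rw [Submodule.span_le]
        rintro _ ⟨l, rfl⟩
        exact hcK l
    rw [hspan]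
    exact Submodule.fg_span (Set.finite_range c)
  -- Step 2 : conclude I is finitely presented
  have hmem : ∀ v, g v ∈ I := fun v => hrange ▸ LinearMap.mem_range_self g v
  refine Module.finitePresentation_of_surjective (g.codRestrict I hmem) ?_ ?_
  · rintro ⟨r, hr⟩
    rw [← hrange] at hr
    obtain ⟨v, hv⟩ := hr
    exact ⟨v, Subtype.ext hv⟩
  · rw [LinearMap.ker_codRestrict]
    exact hK

private lemma chase_3_to_1 (h3 : ∀ I : Ideal R, I.FG → Module.FinitePresentation R I)
    (ι : Type) : Module.Flat R (ι → R) := by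
  classical
  apply Module.Flat.of_forall_exists_factorization
  intro l f x hxf
  suffices H : ∀ {κ : Type} [Fintype κ] {f : κ →₀ R} {x : (κ →₀ R) →ₗ[R] (ι → R)}, x f = 0 →
      ∃ (κ' : Type) (_ : Fintype κ') (a : (κ →₀ R) →ₗ[R] (κ' →₀ R))
        (y : (κ' →₀ R) →ₗ[R] (ι → R)), x = y ∘ₗ a ∧ a f = 0 by
    obtain ⟨κ', _, a, y, hxy, haf⟩ := H hxf
    let e : (κ' →₀ R) ≃ₗ[R] (Fin (Fintype.card κ') →₀ R) :=
      Finsupp.domLCongr (Fintype.equivFin κ')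
    refine ⟨Fintype.card κ', e.toLinearMap ∘ₗ a, y ∘ₗ e.symm.toLinearMap, ?_, ?_⟩
    · rw [hxy]; exact LinearMap.ext fun v => by simp
    · simp [haf]
  clear l f x hxf
  intro κ hκ f x hxf
  -- the ideal generated by the coefficients of f
  set g : (κ →₀ R) →ₗ[R] R := Finsupp.linearCombination R (fun j => f j) with hg
  set I : Ideal R := LinearMap.range g with hI
  have hIfg : I.FG := by
    rw [hI, hg, Finsupp.range_linearCombination]
    exact Submodule.fg_span (Set.finite_range _)
  haveI := h3 I hIfg
  have hmem : ∀ v, g v ∈ I := fun v => LinearMap.mem_range_self g v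
  have hsurj : Function.Surjective (g.codRestrict I hmem) := by
    rintro ⟨r, hr⟩
    obtain ⟨v, hv⟩ := hr
    exact ⟨v, Subtype.ext hv⟩
  have hK : (LinearMap.ker g).FG := by
    have := Module.FinitePresentation.fg_ker (g.codRestrict I hmem) hsurj
    rwa [LinearMap.ker_codRestrict] at this
  obtain ⟨t, ht⟩ := hK
  -- For each i, the vector (x (single j 1) i)_j lies in ker g
  set m : κ → (ι → R) := fun j => x (Finsupp.single j 1) with hm
  have hxv : ∀ (v : κ →₀ R), x v = ∑ j, v j • m j := by
    intro v
    conv_lhs => rw [finsupp_eq_sum_single_smul v]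
    rw [map_sum]
    simp only [map_smul]
    rfl
  set w : ι → (κ →₀ R) := fun i => Finsupp.equivFunOnFinite.symm (fun j => m j i) with hw
  have hwj : ∀ i j, w i j = m j i := fun i j => rfl
  have hwK : ∀ i, w i ∈ LinearMap.ker g := by
    intro i
    rw [LinearMap.mem_ker, hg, lc_fintype]
    have h0 : (∑ j, f j • m j) i = 0 := by
      rw [← hxv f, hxf]; rfl
    rw [Finset.sum_apply] at h0
    rw [← h0]
    exact Finset.sum_congr rfl (fun j _ => by
      rw [hwj, smul_eq_mul, Pi.smul_apply, smul_eq_mul, mul_comm])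
  -- write each w i in terms of the generators t of ker g
  have hrepr : ∀ i, ∃ d : ↥t →₀ R,
      Finsupp.linearCombination R ((↑) : ↥t → (κ →₀ R)) d = w i := by
    intro i
    have h1 : w i ∈ LinearMap.range
        (Finsupp.linearCombination R ((↑) : ↥t → (κ →₀ R))) := by
      rw [Finsupp.range_linearCombination, Subtype.range_coe]
      exact ht.symm ▸ hwK i
    exact h1
  choose d hd using hrepr
  -- build the factorization
  let a : (κ →₀ R) →ₗ[R] (↥t →₀ R) :=
    (Finsupp.linearEquivFunOnFinite R R ↥t).symm.toLinearMap ∘ₗ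
      LinearMap.pi (fun u : ↥t => Finsupp.linearCombination R (fun j => (u : κ →₀ R) j))
  let y : (↥t →₀ R) →ₗ[R] (ι → R) :=
    Finsupp.linearCombination R (fun u : ↥t => (fun i => d i u : ι → R))
  have hav : ∀ (v : κ →₀ R) (u : ↥t),
      a v u = Finsupp.linearCombination R (fun j => (u : κ →₀ R) j) v := fun v u => rfl
  have hav' : ∀ (v : κ →₀ R) (u : ↥t), a v u = ∑ j, v j * (u : κ →₀ R) j := by
    intro v u
    rw [hav, lc_fintype]
    simp [smul_eq_mul]
  refine ⟨↥t, inferInstance, a, y, ?_, ?_⟩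
  · -- x = y ∘ a
    apply LinearMap.ext
    intro v
    funext i
    rw [LinearMap.comp_apply]
    have hyav : y (a v) = ∑ u : ↥t, a v u • (fun i => d i u : ι → R) := lc_fintype _ _
    rw [hxv v, hyav]
    simp only [Finset.sum_apply, Pi.smul_apply, smul_eq_mul]
    have hmji : ∀ j, m j i = ∑ u : ↥t, d i u * (u : κ →₀ R) j := by
      intro j
      rw [← hwj i j, ← hd i, lc_fintype]
      simp [Finset.sum_apply, smul_eq_mul]
    calc ∑ j, v j • m j i
        = ∑ j, v j * ∑ u : ↥t, d i u * (u : κ →₀ R) j := by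
          exact Finset.sum_congr rfl (fun j _ => by rw [smul_eq_mul, hmji])
      _ = ∑ u : ↥t, (∑ j, v j * (u : κ →₀ R) j) * d i u := by
          simp_rw [Finset.mul_sum]
          rw [Finset.sum_comm]
          refine Finset.sum_congr rfl (fun u _ => ?_)
          rw [Finset.sum_mul]
          exact Finset.sum_congr rfl (fun j _ => by ring)
      _ = ∑ u : ↥t, a v u * d i u := by
          exact Finset.sum_congr rfl (fun u _ => by rw [hav'])
  · -- a f = 0
    ext u
    rw [hav', Finsupp.coe_zero, Pi.zero_apply]
    have hu : (u : κ →₀ R) ∈ LinearMap.ker g := ht ▸ Submodule.subset_span u.2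
    rw [LinearMap.mem_ker, hg, lc_fintype] at hu
    rw [← hu]
    exact Finset.sum_congr rfl (fun j _ => by rw [smul_eq_mul, mul_comm])

set_option maxHeartbeats 1000000 in
set_option synthInstance.maxHeartbeats 500000 in
private lemma fp_submodule_pi (h3 : ∀ I : Ideal R, I.FG → Module.FinitePresentation R I) :
    ∀ (n : ℕ) (N : Submodule R (Fin n → R)), N.FG → Module.FinitePresentation R N := by
  intro n
  induction n with
  | zero =>
    intro N _
    haveI : Subsingleton (Fin 0 → R) := ⟨fun a b => funext (fun i => i.elim0)⟩
    haveI : Subsingleton ↥N := ⟨fun a b => Subtype.ext (Subsingleton.elim _ _)⟩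
    refine Module.finitePresentation_of_surjective (0 : R →ₗ[R] ↥N)
      (fun y => ⟨0, Subsingleton.elim _ _⟩) ?_
    rw [LinearMap.ker_zero]
    exact Module.finite_def.mp inferInstance
  | succ n ih =>
    intro N hN
    haveI : Module.Finite R ↥N := Module.Finite.iff_fg.mpr hN
    set π : (Fin (n + 1) → R) →ₗ[R] R := LinearMap.proj (Fin.last n) with hπ
    set I : Ideal R := N.map π with hIdef
    haveI : Module.FinitePresentation R ↥I := h3 I (hN.map π)
    have hmem : ∀ x ∈ N, π x ∈ I := fun x hx => Submodule.mem_map_of_mem hx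
    set φ : ↥N →ₗ[R] ↥I := π.restrict hmem with hφ
    have hφval : ∀ (v : ↥N), (φ v : R) = π (v : Fin (n + 1) → R) := fun v => rfl
    have hφsurj : Function.Surjective φ := by
      rintro ⟨r, hr⟩
      obtain ⟨v, hv, hv'⟩ := hr
      exact ⟨⟨v, hv⟩, Subtype.ext hv'⟩
    have hker : (LinearMap.ker φ).FG := Module.FinitePresentation.fg_ker φ hφsurj
    haveI : Module.Finite R ↥(LinearMap.ker φ) := Module.Finite.iff_fg.mpr hker
    -- the kernel embeds into (Fin n → R)
    set p : (Fin (n + 1) → R) →ₗ[R] (Fin n → R) :=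
      LinearMap.pi (fun i : Fin n => LinearMap.proj i.castSucc) with hp
    set ψ : ↥(LinearMap.ker φ) →ₗ[R] (Fin n → R) :=
      p ∘ₗ (N.subtype ∘ₗ (LinearMap.ker φ).subtype) with hψ
    have hψinj : Function.Injective ψ := by
      intro k₁ k₂ hk
      ext i
      refine Fin.lastCases ?_ ?_ i
      · have h1 : π ((k₁ : ↥N) : Fin (n+1) → R) = π ((k₂ : ↥N) : Fin (n+1) → R) := by
          have e1 : (φ (k₁ : ↥N) : R) = 0 := by
            rw [show φ (k₁ : ↥N) = 0 from k₁.2]; rfl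
          have e2 : (φ (k₂ : ↥N) : R) = 0 := by
            rw [show φ (k₂ : ↥N) = 0 from k₂.2]; rfl
          rw [← hφval, ← hφval, e1, e2]
        exact h1
      · intro i
        have := congrFun hk i
        exact this
    have hrangefg : (LinearMap.range ψ).FG := by
      have h1 : (⊤ : Submodule R ↥(LinearMap.ker φ)).FG := Module.Finite.iff_fg.mp inferInstance
      have h2 := h1.map ψ
      rwa [Submodule.map_top] at h2
    have hfp_range : Module.FinitePresentation R ↥(LinearMap.range ψ) := ih _ hrangefg
    haveI : Module.FinitePresentation R ↥(LinearMap.ker φ) := by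
      haveI := hfp_range
      exact @Module.FinitePresentation.of_equiv R ↥(LinearMap.range ψ) ↥(LinearMap.ker φ) _ inferInstance inferInstance inferInstance inferInstance
        (LinearEquiv.ofInjective ψ hψinj).symm _
    exact Module.finitePresentation_of_ker φ hφsurj

set_option maxHeartbeats 1000000 in
set_option synthInstance.maxHeartbeats 500000 in
private lemma chase_3_to_2 (h3 : ∀ I : Ideal R, I.FG → Module.FinitePresentation R I)
    (F : Type) [AddCommGroup F] [Module R F] (hF : Module.Free R F)
    (N : Submodule R F) (hN : N.FG) : Module.FinitePresentation R N := by
  classical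
  haveI := hF
  obtain ⟨s, hsN⟩ := hN
  obtain ⟨⟨ι', b⟩⟩ := Module.Free.exists_basis (R := R) (M := F)
  set t : Finset ι' := s.sup (fun x => (b.repr x).support) with ht
  -- N is contained in the span of the basis vectors indexed by t
  have hNle : N ≤ Submodule.span R (b '' ↑t) := by
    rw [← hsN, Submodule.span_le]
    intro x hx
    refine Submodule.span_mono (Set.image_mono ?_) (Module.Basis.mem_span_repr_support b x)
    intro i hi
    exact Finset.mem_sup.mpr ⟨x, hx, hi⟩
  set g : (↥t →₀ R) →ₗ[R] F :=
    Finsupp.linearCombination R (⇑b ∘ ((↑) : ↥t → ι')) with hg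
  have hli : LinearIndependent R (⇑b ∘ ((↑) : ↥t → ι')) :=
    b.linearIndependent.comp ((↑) : ↥t → ι') Subtype.coe_injective
  have hginj : Function.Injective g := hli
  have hgrange : LinearMap.range g = Submodule.span R (b '' ↑t) := by
    rw [hg, Finsupp.range_linearCombination, Set.range_comp, Subtype.range_coe]
  set N' : Submodule R (↥t →₀ R) := N.comap g with hN'
  have hmapN' : N'.map g = N := by
    rw [hN', Submodule.map_comap_eq, hgrange]
    exact inf_eq_right.mpr hNle
  have hN'fg : N'.FG := by
    apply Submodule.fg_of_fg_map_injective g hginj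
    rw [hmapN']; exact ⟨s, hsN⟩
  -- transfer to Fin t.card → R
  set E : (↥t →₀ R) ≃ₗ[R] (Fin t.card → R) :=
    (Finsupp.linearEquivFunOnFinite R R ↥t).trans
      (LinearEquiv.funCongrLeft R R (Fintype.equivFinOfCardEq (by simp)).symm) with hE
  have hfgmap : (N'.map E.toLinearMap).FG := hN'fg.map _
  have hfp1 : Module.FinitePresentation R ↥(N'.map E.toLinearMap) :=
    fp_submodule_pi h3 t.card _ hfgmap
  have hfp2 : Module.FinitePresentation R ↥N' := by
    haveI := hfp1
    set e := (Submodule.equivMapOfInjective E.toLinearMap E.injective N').symm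
    exact @Module.FinitePresentation.of_equiv R ↥(N'.map E.toLinearMap) ↥N' _ inferInstance inferInstance inferInstance inferInstance e _
  haveI := hfp2
  set e2 : ↥N' ≃ₗ[R] ↥N :=
    (Submodule.equivMapOfInjective g hginj N').trans (LinearEquiv.ofEq _ _ hmapN') with he2
  exact @Module.FinitePresentation.of_equiv R ↥N' ↥N _ inferInstance inferInstance inferInstance inferInstance e2 _


/-- **Chase.** For a ring `R` the following are equivalent:
(1) any direct product of copies of `R` is flat;
(2) every finitely generated submodule of a free `R`-module is finitely presented;
(3) every finitely generated (left) ideal of `R` is finitely presented. -/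
theorem chase_tfae (R : Type) [CommRing R] :
    List.TFAE
      [ ∀ ι : Type, Module.Flat R (ι → R),
        ∀ (F : Type) (_ : AddCommGroup F) (_ : Module R F), Module.Free R F →
          ∀ N : Submodule R F, N.FG → Module.FinitePresentation R N,
        ∀ I : Ideal R, I.FG → Module.FinitePresentation R I ] := by
  tfae_have 1 → 3 := fun h1 I hI => chase_1_to_3 h1 I hI
  tfae_have 3 → 1 := fun h3 ι => chase_3_to_1 h3 ι
  tfae_have 3 → 2 := fun h3 F hAG hM hF N hN =>
    @chase_3_to_2 R _ h3 F hAG hM hF N hN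
  tfae_have 2 → 3 := fun h2 I hI => h2 R inferInstance inferInstance inferInstance I hI
  tfae_finish
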